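/- Let $p > 1$, $m, \alpha_2, c \in \mathbb{R}$ with $\alpha_2 < 2$ and $\frac{m+1}{p} < c + 1 - \alpha_2$. Let $u \in W^{2,p}_{loc}((0,\infty))$ be such that $y^{\alpha_2}(u'' + c\, u'/y) \in L^p((0,\infty); y^m dy)$, and suppose $\lim_{y \to 0^+} y^c u'(y) = 0$. Then $\|y^{\alpha_2 - 1} u'\|_{L^p((0,\infty); y^m dy)} \le C \|y^{\alpha_2}(u'' + c u'/y)\|_{L^p((0,\infty); y^m dy)}$ with $C = \left(c + 1 - \alpha_2 - \frac{m+1}{p}\right)^{-1}$. -/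

import Mathlib

open MeasureTheory Filter
open scoped ENNReal Topology

/-- The weighted measure `y^m dy` on `(0,∞)`. -/
noncomputable def wm (m : ℝ) : Measure ℝ :=
  (volume.restrict (Set.Ioi 0)).withDensity fun y => ENNReal.ofReal (y ^ m)

open Set

lemma lint_Ioo_rpow {r y : ℝ} (hr : -1 < r) (hy : 0 ≤ y) :
    ∫⁻ s in Ioo 0 y, ENNReal.ofReal (s ^ r) = ENNReal.ofReal (y ^ (r + 1) / (r + 1)) := by
  have hint : IntegrableOn (fun s : ℝ => s ^ r) (Ioo 0 y) volume := by
    have := intervalIntegral.intervalIntegrable_rpow' (a := 0) (b := y) hr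
    rw [intervalIntegrable_iff_integrableOn_Ioo_of_le hy] at this
    exact this
  rw [← ofReal_integral_eq_lintegral_ofReal hint]
  · congr 1
    have h1 : ∫ s in Ioo 0 y, s ^ r = ∫ s in (0:ℝ)..y, s ^ r := by
      rw [intervalIntegral.integral_of_le hy, ← integral_Ioc_eq_integral_Ioo]
    rw [h1, integral_rpow (Or.inl hr), Real.zero_rpow (by linarith), sub_zero]
  · exact (ae_restrict_iff' measurableSet_Ioo).2 (Eventually.of_forall fun s hs =>
      Real.rpow_nonneg hs.1.le r)

lemma lint_Ioi_rpow {r s : ℝ} (hr : r < -1) (hs : 0 < s) :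
    ∫⁻ y in Ioi s, ENNReal.ofReal (y ^ r) = ENNReal.ofReal (s ^ (r + 1) / (-(r + 1))) := by
  rw [← ofReal_integral_eq_lintegral_ofReal (integrableOn_Ioi_rpow_of_lt hr hs)]
  · rw [integral_Ioi_rpow_of_lt hr hs]
    rw [neg_div, ← div_neg]
  · exact (ae_restrict_iff' measurableSet_Ioi).2 (Eventually.of_forall fun y hy =>
      Real.rpow_nonneg ((hs.trans hy).le) r)

lemma swap_lemma {h k : ℝ → ℝ≥0∞} (hh : Measurable h) (hk : Measurable k) :
    ∫⁻ y in Ioi (0:ℝ), h y * ∫⁻ s in Ioo 0 y, k s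
      = ∫⁻ s in Ioi (0:ℝ), k s * ∫⁻ y in Ioi s, h y := by
  set T : Set (ℝ × ℝ) := {q : ℝ × ℝ | 0 < q.2 ∧ q.2 < q.1} with hTdef
  have hT : MeasurableSet T :=
    (measurableSet_lt measurable_const measurable_snd).inter
      (measurableSet_lt measurable_snd measurable_fst)
  have hΦ : Measurable fun q : ℝ × ℝ => T.indicator (fun q => h q.1 * k q.2) q :=
    ((hh.comp measurable_fst).mul (hk.comp measurable_snd)).indicator hT
  have key := lintegral_lintegral_swap (μ := volume) (ν := volume)
    (f := fun y s => T.indicator (fun q => h q.1 * k q.2) (y, s)) hΦ.aemeasurable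
  calc ∫⁻ y in Ioi (0:ℝ), h y * ∫⁻ s in Ioo 0 y, k s
      = ∫⁻ y, ∫⁻ s, T.indicator (fun q => h q.1 * k q.2) (y, s) := by
        rw [← lintegral_indicator measurableSet_Ioi]
        refine lintegral_congr fun y => ?_
        rw [Set.indicator_apply]
        by_cases hy : y ∈ Ioi (0:ℝ)
        · simp only [hy, if_true]
          rw [← lintegral_const_mul _ hk, ← lintegral_indicator measurableSet_Ioo]
          refine lintegral_congr fun s => ?_
          by_cases hs : s ∈ Ioo 0 y
          · rw [Set.indicator_of_mem hs, Set.indicator_of_mem (show (y, s) ∈ T from ⟨hs.1, hs.2⟩)]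
          · rw [Set.indicator_of_notMem hs, Set.indicator_of_notMem
              (show (y, s) ∉ T from fun hc => hs ⟨hc.1, hc.2⟩)]
        · simp only [hy, if_false]
          rw [eq_comm]
          have hz : ∀ s : ℝ, T.indicator (fun q : ℝ × ℝ => h q.1 * k q.2) (y, s) = 0 := fun s =>
            Set.indicator_of_notMem (fun hc => hy (lt_trans hc.1 hc.2)) _
          simp [hz]
    _ = ∫⁻ s, ∫⁻ y, T.indicator (fun q => h q.1 * k q.2) (y, s) := key
    _ = ∫⁻ s in Ioi (0:ℝ), k s * ∫⁻ y in Ioi s, h y := by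
        rw [← lintegral_indicator measurableSet_Ioi]
        refine lintegral_congr fun s => ?_
        rw [Set.indicator_apply]
        by_cases hs : s ∈ Ioi (0:ℝ)
        · simp only [hs, if_true]
          rw [mul_comm (k s), ← lintegral_mul_const _ hh,
            ← lintegral_indicator measurableSet_Ioi]
          refine lintegral_congr fun y => ?_
          by_cases hy : y ∈ Ioi s
          · rw [Set.indicator_of_mem hy, Set.indicator_of_mem
              (show (y, s) ∈ T from ⟨hs, hy⟩)]
          · rw [Set.indicator_of_notMem hy, Set.indicator_of_notMem
              (show (y, s) ∉ T from fun hc => hy hc.2)]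
        · simp only [hs, if_false]
          have hz : ∀ y : ℝ, T.indicator (fun q : ℝ × ℝ => h q.1 * k q.2) (y, s) = 0 := fun y =>
            Set.indicator_of_notMem (fun hc => hs hc.1) _
          simp [hz]

lemma wm_lint (m : ℝ) (g : ℝ → ℝ≥0∞) (hg : AEMeasurable g (volume.restrict (Ioi 0))) :
    ∫⁻ y, g y ∂(wm m) = ∫⁻ y in Ioi 0, ENNReal.ofReal (y ^ m) * g y := by
  rw [wm, lintegral_withDensity_eq_lintegral_mul₀ (by fun_prop) hg]
  rfl

lemma wm_eLpNorm (m p : ℝ) (hp : 0 < p) (F : ℝ → ℝ)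
    (hF : AEMeasurable F (volume.restrict (Ioi 0))) :
    eLpNorm F (ENNReal.ofReal p) (wm m)
      = (∫⁻ y in Ioi 0, ENNReal.ofReal (y ^ m) * (‖F y‖₊ : ℝ≥0∞) ^ p) ^ (1 / p) := by
  rw [eLpNorm_eq_lintegral_rpow_enorm_toReal (by simp [hp]) (by simp),
    ENNReal.toReal_ofReal hp.le,
    wm_lint m _ ((hF.enorm).pow_const p)]
  rfl

set_option maxHeartbeats 1000000 in
/-- Weighted Hardy inequality for the Bessel-type operator: if `(m+1)/p < c+1-α₂`,
`y^{α₂}(u'' + c u'/y) ∈ L^p_m` and `y^c u'(y) → 0` as `y → 0⁺`, then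
`‖y^{α₂-1} u'‖ ≤ (c+1-α₂-(m+1)/p)⁻¹ ‖y^{α₂}(u'' + c u'/y)‖`. -/
theorem stmt14 (p m α₂ c : ℝ) (hp : 1 < p) (hα : α₂ < 2)
    (h : (m + 1) / p < c + 1 - α₂)
    (u u' u'' : ℝ → ℝ)
    (h1 : ∀ y, 0 < y → HasDerivAt u (u' y) y)
    (h2 : ∀ y, 0 < y → HasDerivAt u' (u'' y) y)
    (hf : MemLp (fun y => y ^ α₂ * (u'' y + c * u' y / y)) (ENNReal.ofReal p) (wm m))
    (h0 : Tendsto (fun y => y ^ c * u' y) (𝓝[>] 0) (𝓝 0)) :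
    eLpNorm (fun y => y ^ (α₂ - 1) * u' y) (ENNReal.ofReal p) (wm m) ≤
      ENNReal.ofReal (c + 1 - α₂ - (m + 1) / p)⁻¹ *
        eLpNorm (fun y => y ^ α₂ * (u'' y + c * u' y / y)) (ENNReal.ofReal p) (wm m) := by
  have hp0 : (0:ℝ) < p := by linarith
  set q : ℝ := p / (p - 1) with hqdef
  have hpq : p.HolderConjugate q := Real.HolderConjugate.conjExponent hp
  set K : ℝ := c + 1 - α₂ - (m + 1) / p with hKdef
  have hK : 0 < K := by simp only [hKdef]; linarith
  set β : ℝ := α₂ - c with hβdef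
  set a : ℝ := (1 + β * p + m) / (p * q) with hadef
  have hq0 : (0:ℝ) < q := hpq.symm.pos
  have hpne : p ≠ 0 := ne_of_gt hp0
  have hp1' : p - 1 ≠ 0 := sub_ne_zero.2 (ne_of_gt hp)
  have haq : a * q = 1 - K := by
    rw [hadef, hqdef, hKdef, hβdef]
    field_simp
    ring
  have hap : a * p = β * p + m + K := by
    rw [hadef, hqdef, hKdef, hβdef]
    field_simp
    ring
  -- the right-hand side function and its measurable representative
  set f : ℝ → ℝ := fun y => y ^ α₂ * (u'' y + c * u' y / y) with hfdef
  set f₁ : ℝ → ℝ := fun y => y ^ α₂ * (deriv (deriv u) y + c * deriv u y / y) with hf₁def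
  have hu'eq : ∀ y, 0 < y → deriv u y = u' y := fun y hy => (h1 y hy).deriv
  have hu''eq : ∀ y, 0 < y → deriv (deriv u) y = u'' y := by
    intro y hy
    have hev : deriv u =ᶠ[𝓝 y] u' :=
      eventuallyEq_of_mem (Ioi_mem_nhds hy) fun x hx => (h1 x hx).deriv
    rw [hev.deriv_eq]
    exact (h2 y hy).deriv
  have hff₁ : ∀ y, 0 < y → f y = f₁ y := by
    intro y hy
    simp only [hfdef, hf₁def, hu'eq y hy, hu''eq y hy]
  have hmf₁ : Measurable f₁ := by
    have m1 : Measurable (deriv (deriv u)) := measurable_deriv _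
    have m2 : Measurable (deriv u) := measurable_deriv _
    fun_prop
  set G : ℝ → ℝ≥0∞ := fun s => (‖f₁ s‖₊ : ℝ≥0∞) with hGdef
  have hmG : Measurable G := hmf₁.enorm
  have hGf : ∀ s, 0 < s → G s = ENNReal.ofReal |f s| := by
    intro s hs
    simp only [hGdef]
    simp only [← hff₁ s hs, ← enorm_eq_nnnorm, Real.enorm_eq_ofReal_abs]
    -- identities for exponents
  have hp1 : p - 1 ≠ 0 := sub_ne_zero.2 (ne_of_gt hp)
  have hexp : m + (β - 1) * p + K * (p - 1) = -(1 + K) := by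
    have hKp : K * p = (c + 1 - α₂) * p - (m + 1) := by
      rw [hKdef]; field_simp
    rw [hβdef]; linear_combination hKp
  have hpq2 : p / q = p - 1 := by rw [hqdef]; field_simp
  -- the weighted p-th power integral of f
  set I : ℝ≥0∞ := ∫⁻ s in Ioi 0, ENNReal.ofReal (s ^ m) * G s ^ p with hIdef
  have hfae : AEMeasurable f (volume.restrict (Ioi 0)) :=
    hmf₁.aemeasurable.congr (ae_restrict_of_forall_mem measurableSet_Ioi
      (fun y hy => (hff₁ y hy).symm))
  have hEq : eLpNorm f (ENNReal.ofReal p) (wm m) = I ^ (1 / p) := by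
    rw [wm_eLpNorm m p hp0 f hfae]
    congr 1
    refine setLIntegral_congr_fun measurableSet_Ioi (fun y hy => ?_)
    rw [← enorm_eq_nnnorm, Real.enorm_eq_ofReal_abs, ← hGf y hy]
  have hIfin : I ≠ ⊤ := by
    have hI2 : I = (I ^ (1 / p)) ^ p := by
      rw [← ENNReal.rpow_mul, one_div, inv_mul_cancel₀ (ne_of_gt hp0), ENNReal.rpow_one]
    rw [hI2, ← hEq]
    exact (ENNReal.rpow_lt_top_of_nonneg hp0.le hf.2.ne).ne
  -- the Hardy-type kernels
  set W : ℝ → ℝ≥0∞ := fun y => ∫⁻ s in Ioo 0 y, ENNReal.ofReal (s ^ (c - α₂)) * G s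
    with hWdef
  set A : ℝ → ℝ≥0∞ := fun y => ∫⁻ s in Ioo 0 y, ENNReal.ofReal (s ^ (m + K)) * G s ^ p
    with hAdef
  -- Hölder inequality for W
  have hHold : ∀ y : ℝ, 0 < y →
      W y ≤ A y ^ (1 / p) * ENNReal.ofReal (y ^ K / K) ^ (1 / q) := by
    intro y hy
    have hsplit : W y = ∫⁻ s in Ioo 0 y,
        ENNReal.ofReal (s ^ (a + (c - α₂))) * G s * ENNReal.ofReal (s ^ (-a)) := by
      refine setLIntegral_congr_fun measurableSet_Ioo (fun s hs => ?_)
      rw [mul_comm (ENNReal.ofReal (s ^ (a + (c - α₂))) * G s), ← mul_assoc,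
        ← ENNReal.ofReal_mul (Real.rpow_nonneg hs.1.le _), ← Real.rpow_add hs.1]
      ring_nf
    rw [hsplit]
    have hHo := ENNReal.lintegral_mul_le_Lp_mul_Lq (volume.restrict (Ioo 0 y)) hpq
      (f := fun s => ENNReal.ofReal (s ^ (a + (c - α₂))) * G s)
      (g := fun s => ENNReal.ofReal (s ^ (-a)))
      (by fun_prop) (by fun_prop)
    simp only [Pi.mul_apply] at hHo
    have e1 : ∫⁻ s in Ioo 0 y, (ENNReal.ofReal (s ^ (a + (c - α₂))) * G s) ^ p = A y := by
      refine setLIntegral_congr_fun measurableSet_Ioo (fun s hs => ?_)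
      rw [ENNReal.mul_rpow_of_nonneg _ _ hp0.le,
        ENNReal.ofReal_rpow_of_nonneg (Real.rpow_nonneg hs.1.le _) hp0.le,
        ← Real.rpow_mul hs.1.le]
      have he : (a + (c - α₂)) * p = m + K := by
        rw [hβdef] at hap; linear_combination hap
      rw [he]
    have e2 : ∫⁻ s in Ioo 0 y, (ENNReal.ofReal (s ^ (-a))) ^ q
        = ENNReal.ofReal (y ^ K / K) := by
      have hstep : ∫⁻ s in Ioo 0 y, (ENNReal.ofReal (s ^ (-a))) ^ q
          = ∫⁻ s in Ioo 0 y, ENNReal.ofReal (s ^ (K - 1)) := by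
        refine setLIntegral_congr_fun measurableSet_Ioo (fun s hs => ?_)
        rw [ENNReal.ofReal_rpow_of_nonneg (Real.rpow_nonneg hs.1.le _) hq0.le,
          ← Real.rpow_mul hs.1.le]
        have hKq : -a * q = K - 1 := by linear_combination -haq
        rw [hKq]
      rw [hstep, lint_Ioo_rpow (by linarith) hy.le]
      congr 2 <;> ring
    rw [e1, e2] at hHo
    exact hHo
  -- A is controlled by I
  have hA_le : ∀ y : ℝ, 0 < y → A y ≤ ENNReal.ofReal (y ^ K) * I := by
    intro y hy
    have step : A y ≤ ∫⁻ s in Ioo 0 y,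
        ENNReal.ofReal (y ^ K) * (ENNReal.ofReal (s ^ m) * G s ^ p) := by
      refine setLIntegral_mono' measurableSet_Ioo fun s hs => ?_
      rw [← mul_assoc, ← ENNReal.ofReal_mul (Real.rpow_nonneg hy.le _)]
      refine mul_le_mul_left (ENNReal.ofReal_le_ofReal ?_) _
      rw [Real.rpow_add hs.1, mul_comm]
      exact mul_le_mul_of_nonneg_right
        (Real.rpow_le_rpow hs.1.le hs.2.le hK.le) (Real.rpow_nonneg hs.1.le m)
    refine le_trans step ?_
    rw [lintegral_const_mul' _ _ ENNReal.ofReal_ne_top]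
    exact mul_le_mul_right (lintegral_mono_set fun s hs => hs.1) _
  have hWfin : ∀ y : ℝ, 0 < y → W y ≠ ⊤ := by
    intro y hy
    refine ne_top_of_le_ne_top ?_ (hHold y hy)
    exact ENNReal.mul_ne_top
      (ENNReal.rpow_ne_top_of_nonneg (one_div_nonneg.2 hp0.le)
        (ne_top_of_le_ne_top (ENNReal.mul_ne_top ENNReal.ofReal_ne_top hIfin) (hA_le y hy)))
      (ENNReal.rpow_ne_top_of_nonneg (one_div_nonneg.2 hq0.le) ENNReal.ofReal_ne_top)
  -- pointwise identity of integrands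
  have hptw : ∀ s : ℝ, 0 < s →
      ENNReal.ofReal |s ^ (c - α₂) * f s| = ENNReal.ofReal (s ^ (c - α₂)) * G s := by
    intro s hs
    rw [abs_mul, abs_of_nonneg (Real.rpow_nonneg hs.le _),
      ENNReal.ofReal_mul (Real.rpow_nonneg hs.le _), hGf s hs]
  -- integrability of the kernel
  have hIntOn : ∀ Y : ℝ, 0 < Y →
      IntegrableOn (fun s => s ^ (c - α₂) * f s) (Ioo 0 Y) volume := by
    intro Y hY
    constructor
    · have hm : Measurable fun s : ℝ => s ^ (c - α₂) * f₁ s := by fun_prop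
      refine hm.aestronglyMeasurable.congr ?_
      exact ae_restrict_of_forall_mem measurableSet_Ioo fun s hs => by
        simp only; rw [hff₁ s hs.1]
    · rw [hasFiniteIntegral_iff_norm]
      have hWY : ∫⁻ s in Ioo 0 Y, ENNReal.ofReal ‖s ^ (c - α₂) * f s‖ = W Y := by
        refine setLIntegral_congr_fun measurableSet_Ioo (fun s hs => ?_)
        rw [Real.norm_eq_abs, hptw s hs.1]
      rw [hWY]
      exact lt_top_iff_ne_top.2 (hWfin Y hY)
  -- fundamental theorem of calculus
  have hFTC : ∀ x y : ℝ, 0 < x → x < y →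
      ∫ s in x..y, s ^ (c - α₂) * f s = y ^ c * u' y - x ^ c * u' x := by
    intro x y hx hxy
    have hderiv : ∀ s ∈ uIcc x y,
        HasDerivAt (fun t => t ^ c * u' t) (s ^ (c - α₂) * f s) s := by
      intro s hs
      rw [uIcc_of_le hxy.le] at hs
      have hs0 : 0 < s := lt_of_lt_of_le hx hs.1
      have hd := (Real.hasDerivAt_rpow_const (x := s) (p := c) (Or.inl hs0.ne')).mul (h2 s hs0)
      convert hd using 1
      · rfl
      · rfl
      · rfl
      have e1' : s ^ (c - α₂) * s ^ α₂ = s ^ c := by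
        rw [← Real.rpow_add hs0]; ring_nf
      have e2' : s ^ (c - 1) = s ^ c / s := by
        rw [Real.rpow_sub hs0, Real.rpow_one]
      rw [← mul_assoc, e1', e2']
      field_simp
      ring
    have hii : IntervalIntegrable (fun s => s ^ (c - α₂) * f s) volume x y := by
      rw [intervalIntegrable_iff, uIoc_of_le hxy.le]
      exact (hIntOn (y + 1) (by linarith)).mono_set fun s hs =>
        ⟨lt_trans hx hs.1, lt_of_le_of_lt hs.2 (by linarith)⟩
    exact intervalIntegral.integral_eq_sub_of_hasDerivAt hderiv hii
  -- the boundary estimate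
  have hR : ∀ y : ℝ, 0 < y → ENNReal.ofReal (y ^ c * |u' y|) ≤ W y := by
    intro y hy
    set R : ℝ := ∫ s in Ioo 0 y, |s ^ (c - α₂) * f s| with hRdef
    have hRW : ENNReal.ofReal R = W y := by
      rw [hRdef, ofReal_integral_eq_lintegral_ofReal (hIntOn y hy).abs
        (Eventually.of_forall fun s => abs_nonneg _)]
      exact setLIntegral_congr_fun measurableSet_Ioo
        (fun s hs => hptw s hs.1)
    rw [← hRW]
    refine ENNReal.ofReal_le_ofReal ?_
    have hyabs : y ^ c * |u' y| = |y ^ c * u' y| := by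
      rw [abs_mul, abs_of_nonneg (Real.rpow_nonneg hy.le _)]
    rw [hyabs]
    refine le_of_forall_pos_le_add fun ε hε => ?_
    have hev1 : ∀ᶠ x in 𝓝[>] (0:ℝ), |x ^ c * u' x| < ε := by
      have := Metric.tendsto_nhds.mp h0 ε hε
      simpa [Real.dist_eq, abs_mul] using this
    have hev2 : ∀ᶠ x in 𝓝[>] (0:ℝ), x ∈ Ioo 0 y :=
      Filter.eventually_of_mem (Ioo_mem_nhdsGT_of_mem ⟨le_refl 0, hy⟩) fun x hx => hx
    obtain ⟨x, hxe, hxm⟩ := (hev1.and hev2).exists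
    have hkey := hFTC x y hxm.1 hxm.2
    have hvy : y ^ c * u' y = x ^ c * u' x + ∫ s in x..y, s ^ (c - α₂) * f s := by
      rw [hkey]; ring
    have hIB : |∫ s in x..y, s ^ (c - α₂) * f s| ≤ R := by
      refine le_trans (intervalIntegral.abs_integral_le_integral_abs hxm.2.le) ?_
      rw [hRdef, intervalIntegral.integral_of_le hxm.2.le, integral_Ioc_eq_integral_Ioo]
      refine setIntegral_mono_set (hIntOn y hy).abs
        (Eventually.of_forall fun s => abs_nonneg _)
        (HasSubset.Subset.eventuallyLE fun s hs => ⟨lt_trans hxm.1 hs.1, hs.2⟩)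
    calc |y ^ c * u' y| ≤ |x ^ c * u' x| + |∫ s in x..y, s ^ (c - α₂) * f s| := by
          rw [hvy]; exact abs_add_le _ _
      _ ≤ ε + R := add_le_add hxe.le hIB
      _ = R + ε := by ring
  -- pointwise bound for the integrand of the left-hand side
  set F : ℝ → ℝ := fun y => y ^ (α₂ - 1) * u' y with hFdef
  have hFae : AEMeasurable F (volume.restrict (Ioi 0)) := by
    have hmd : Measurable (deriv u) := measurable_deriv u
    have hm : Measurable fun y : ℝ => y ^ (α₂ - 1) * deriv u y := by fun_prop
    exact hm.aemeasurable.congr (ae_restrict_of_forall_mem measurableSet_Ioi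
      fun y hy => by simp only [hFdef, hu'eq y hy])
  have hpoint : ∀ y : ℝ, 0 < y →
      ENNReal.ofReal (y ^ m) * (‖F y‖₊ : ℝ≥0∞) ^ p ≤
        ENNReal.ofReal ((K ^ (p - 1))⁻¹) *
          (ENNReal.ofReal (y ^ (-(1 + K))) * A y) := by
    intro y hy
    have hF1 : (‖F y‖₊ : ℝ≥0∞) ≤ ENNReal.ofReal (y ^ (β - 1)) * W y := by
      rw [← enorm_eq_nnnorm, Real.enorm_eq_ofReal_abs]
      have habs : |F y| = y ^ (β - 1) * (y ^ c * |u' y|) := by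
        simp only [hFdef]
        rw [abs_mul, abs_of_nonneg (Real.rpow_nonneg hy.le _), ← mul_assoc,
          ← Real.rpow_add hy, hβdef]
        ring_nf
      rw [habs, ENNReal.ofReal_mul (Real.rpow_nonneg hy.le _)]
      exact mul_le_mul_right (hR y hy) _
    have hWp : W y ^ p ≤ A y * ENNReal.ofReal (y ^ (K * (p - 1)) / K ^ (p - 1)) := by
      calc W y ^ p ≤ (A y ^ (1 / p) * ENNReal.ofReal (y ^ K / K) ^ (1 / q)) ^ p :=
            ENNReal.rpow_le_rpow (hHold y hy) hp0.le
        _ = A y * ENNReal.ofReal (y ^ (K * (p - 1)) / K ^ (p - 1)) := by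
            rw [ENNReal.mul_rpow_of_nonneg _ _ hp0.le, ← ENNReal.rpow_mul,
              ← ENNReal.rpow_mul, one_div, inv_mul_cancel₀ (ne_of_gt hp0),
              ENNReal.rpow_one]
            congr 1
            have hqexp : 1 / q * p = p - 1 := by
              rw [div_mul_eq_mul_div, one_mul, hpq2]
            rw [hqexp, ENNReal.ofReal_rpow_of_nonneg
                (div_nonneg (Real.rpow_nonneg hy.le _) hK.le) (by linarith : (0:ℝ) ≤ p - 1),
              Real.div_rpow (Real.rpow_nonneg hy.le _) hK.le, ← Real.rpow_mul hy.le]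
    have hF2 : (‖F y‖₊ : ℝ≥0∞) ^ p ≤ ENNReal.ofReal (y ^ ((β - 1) * p)) *
        (A y * ENNReal.ofReal (y ^ (K * (p - 1)) / K ^ (p - 1))) := by
      calc (‖F y‖₊ : ℝ≥0∞) ^ p
          ≤ (ENNReal.ofReal (y ^ (β - 1)) * W y) ^ p :=
            ENNReal.rpow_le_rpow hF1 hp0.le
        _ = ENNReal.ofReal (y ^ (β - 1)) ^ p * W y ^ p :=
            ENNReal.mul_rpow_of_nonneg _ _ hp0.le
        _ ≤ ENNReal.ofReal (y ^ ((β - 1) * p)) *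
            (A y * ENNReal.ofReal (y ^ (K * (p - 1)) / K ^ (p - 1))) := by
            rw [ENNReal.ofReal_rpow_of_nonneg (Real.rpow_nonneg hy.le _) hp0.le,
              ← Real.rpow_mul hy.le]
            exact mul_le_mul_right hWp _
    calc ENNReal.ofReal (y ^ m) * (‖F y‖₊ : ℝ≥0∞) ^ p
        ≤ ENNReal.ofReal (y ^ m) * (ENNReal.ofReal (y ^ ((β - 1) * p)) *
            (A y * ENNReal.ofReal (y ^ (K * (p - 1)) / K ^ (p - 1)))) :=
          mul_le_mul_right hF2 _
      _ = ENNReal.ofReal ((K ^ (p - 1))⁻¹) *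
            (ENNReal.ofReal (y ^ (-(1 + K))) * A y) := by
          rw [div_eq_mul_inv, ENNReal.ofReal_mul (Real.rpow_nonneg hy.le _)]
          have hcollect : ENNReal.ofReal (y ^ m) * ENNReal.ofReal (y ^ ((β - 1) * p))
              * ENNReal.ofReal (y ^ (K * (p - 1))) = ENNReal.ofReal (y ^ (-(1 + K))) := by
            rw [← ENNReal.ofReal_mul (Real.rpow_nonneg hy.le _), ← Real.rpow_add hy,
              ← ENNReal.ofReal_mul (Real.rpow_nonneg hy.le _), ← Real.rpow_add hy, hexp]
          calc ENNReal.ofReal (y ^ m) * (ENNReal.ofReal (y ^ ((β - 1) * p)) *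
              (A y * (ENNReal.ofReal (y ^ (K * (p - 1))) * ENNReal.ofReal ((K ^ (p - 1))⁻¹))))
              = ENNReal.ofReal ((K ^ (p - 1))⁻¹) *
                ((ENNReal.ofReal (y ^ m) * ENNReal.ofReal (y ^ ((β - 1) * p))
                  * ENNReal.ofReal (y ^ (K * (p - 1)))) * A y) := by ring
            _ = ENNReal.ofReal ((K ^ (p - 1))⁻¹) *
                (ENNReal.ofReal (y ^ (-(1 + K))) * A y) := by rw [hcollect]
  -- the main lintegral estimate
  have hL : eLpNorm F (ENNReal.ofReal p) (wm m)
      = (∫⁻ y in Ioi 0, ENNReal.ofReal (y ^ m) * (‖F y‖₊ : ℝ≥0∞) ^ p) ^ (1 / p) :=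
    wm_eLpNorm m p hp0 F hFae
  have hmain : ∫⁻ y in Ioi 0, ENNReal.ofReal (y ^ m) * (‖F y‖₊ : ℝ≥0∞) ^ p
      ≤ ENNReal.ofReal ((K ^ p)⁻¹) * I := by
    calc ∫⁻ y in Ioi 0, ENNReal.ofReal (y ^ m) * (‖F y‖₊ : ℝ≥0∞) ^ p
        ≤ ∫⁻ y in Ioi 0, ENNReal.ofReal ((K ^ (p - 1))⁻¹) *
            (ENNReal.ofReal (y ^ (-(1 + K))) * A y) :=
          setLIntegral_mono' measurableSet_Ioi fun y hy => hpoint y hy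
      _ = ENNReal.ofReal ((K ^ (p - 1))⁻¹) *
            ∫⁻ y in Ioi 0, ENNReal.ofReal (y ^ (-(1 + K))) * A y :=
          lintegral_const_mul' _ _ ENNReal.ofReal_ne_top
      _ = ENNReal.ofReal ((K ^ (p - 1))⁻¹) * ∫⁻ s in Ioi 0,
            (ENNReal.ofReal (s ^ (m + K)) * G s ^ p) *
              ∫⁻ y in Ioi s, ENNReal.ofReal (y ^ (-(1 + K))) := by
          rw [hAdef]
          rw [swap_lemma (by fun_prop) (by fun_prop)]
      _ = ENNReal.ofReal ((K ^ (p - 1))⁻¹) * ∫⁻ s in Ioi 0,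
            ENNReal.ofReal K⁻¹ * (ENNReal.ofReal (s ^ m) * G s ^ p) := by
          congr 1
          refine setLIntegral_congr_fun measurableSet_Ioi
            (fun s hs => ?_)
          rw [lint_Ioi_rpow (by linarith) hs]
          have hex : -(1 + K) + 1 = -K := by ring
          rw [hex, show -(-K) = K by ring, div_eq_mul_inv,
            ENNReal.ofReal_mul (Real.rpow_nonneg hs.le _)]
          have hcomb : ENNReal.ofReal (s ^ (m + K)) * ENNReal.ofReal (s ^ (-K))
              = ENNReal.ofReal (s ^ m) := by
            rw [← ENNReal.ofReal_mul (Real.rpow_nonneg hs.le _), ← Real.rpow_add hs]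
            norm_num
          calc ENNReal.ofReal (s ^ (m + K)) * G s ^ p *
                (ENNReal.ofReal (s ^ (-K)) * ENNReal.ofReal K⁻¹)
              = ENNReal.ofReal K⁻¹ * ((ENNReal.ofReal (s ^ (m + K)) *
                  ENNReal.ofReal (s ^ (-K))) * G s ^ p) := by ring
            _ = ENNReal.ofReal K⁻¹ * (ENNReal.ofReal (s ^ m) * G s ^ p) := by rw [hcomb]
      _ = ENNReal.ofReal ((K ^ p)⁻¹) * I := by
          rw [lintegral_const_mul' _ _ ENNReal.ofReal_ne_top, ← mul_assoc,
            ← ENNReal.ofReal_mul (inv_nonneg.2 (Real.rpow_nonneg hK.le _))]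
          congr 2
          rw [← mul_inv]
          congr 1
          nth_rewrite 2 [show K = K ^ (1:ℝ) from (Real.rpow_one K).symm]
          rw [← Real.rpow_add hK]
          norm_num
  -- conclusion
  rw [hL, hEq]
  calc (∫⁻ y in Ioi 0, ENNReal.ofReal (y ^ m) * (‖F y‖₊ : ℝ≥0∞) ^ p) ^ (1 / p)
      ≤ (ENNReal.ofReal ((K ^ p)⁻¹) * I) ^ (1 / p) :=
        ENNReal.rpow_le_rpow hmain (one_div_nonneg.2 hp0.le)
    _ = ENNReal.ofReal K⁻¹ * I ^ (1 / p) := by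
        rw [ENNReal.mul_rpow_of_nonneg _ _ (one_div_nonneg.2 hp0.le),
          ENNReal.ofReal_rpow_of_nonneg (inv_nonneg.2 (Real.rpow_nonneg hK.le _))
            (one_div_nonneg.2 hp0.le)]
        congr 2
        rw [← Real.rpow_neg hK.le, ← Real.rpow_mul hK.le]
        have hmp : -p * (1 / p) = -1 := by field_simp
        rw [hmp, Real.rpow_neg_one]
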